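/- For all t₁, t₂, t₃, t₄ ∈ ℂ, with g = x₂(t₄) x₁(t₃) x₂(t₂) x₁(t₁) and coefficients b_k, d_k as above, the 3×3 determinant det [[b₀, b₁, b₂],[1, d₁, d₂],[0, b₀, b₁]] equals t₃ t₂² t₁³. (This is the evaluation of the cluster variable φ_{V₃} at the point 𝐱_𝐢(𝐭).) -/

import Mathlib

open Polynomial
noncomputable def x₁ (t : ℂ) : Matrix (Fin 2) (Fin 2) (Polynomial ℂ) :=
  !![1, C t; 0, 1]
noncomputable def x₂ (t : ℂ) : Matrix (Fin 2) (Fin 2) (Polynomial ℂ) :=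
  !![1, 0; C t * X, 1]
theorem phi_V3_eval (t₁ t₂ t₃ t₄ : ℂ) :
    let g := x₂ t₄ * x₁ t₃ * x₂ t₂ * x₁ t₁
    let b := g 0 1; let d := g 1 1
    Matrix.det !![b.coeff 0, b.coeff 1, b.coeff 2;
                  1, d.coeff 1, d.coeff 2;
                  0, b.coeff 0, b.coeff 1] = t₃ * t₂ ^ 2 * t₁ ^ 3 := by
  have hb : (x₂ t₄ * x₁ t₃ * x₂ t₂ * x₁ t₁) 0 1 = C (t₁+t₃) + C (t₁*t₂*t₃) * X := by
    simp [x₁, x₂, Matrix.mul_apply, Fin.sum_univ_succ]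
    ring
  have hd : (x₂ t₄ * x₁ t₃ * x₂ t₂ * x₁ t₁) 1 1 =
      C 1 + C (t₄*t₁+t₄*t₃+t₁*t₂) * X + C (t₁*t₂*t₃*t₄) * X^2 := by
    simp [x₁, x₂, Matrix.mul_apply, Fin.sum_univ_succ]
    ring
  have cb0 : ((x₂ t₄ * x₁ t₃ * x₂ t₂ * x₁ t₁) 0 1).coeff 0 = t₁ + t₃ := by
    rw [hb]; simp
  have cb1 : ((x₂ t₄ * x₁ t₃ * x₂ t₂ * x₁ t₁) 0 1).coeff 1 = t₁*t₂*t₃ := by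
    rw [hb]; simp [coeff_add, coeff_C]
  have cb2 : ((x₂ t₄ * x₁ t₃ * x₂ t₂ * x₁ t₁) 0 1).coeff 2 = 0 := by
    rw [hb]; rw [coeff_add, coeff_C_mul, coeff_C, coeff_X]; norm_num
  have cd1 : ((x₂ t₄ * x₁ t₃ * x₂ t₂ * x₁ t₁) 1 1).coeff 1 = t₄*t₁+t₄*t₃+t₁*t₂ := by
    rw [hd]; rw [coeff_add, coeff_add, coeff_C_mul, coeff_C_mul, coeff_C, coeff_X,
      coeff_X_pow]; norm_num
  have cd2 : ((x₂ t₄ * x₁ t₃ * x₂ t₂ * x₁ t₁) 1 1).coeff 2 = t₁*t₂*t₃*t₄ := by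
    rw [hd]; rw [coeff_add, coeff_add, coeff_C_mul, coeff_C_mul, coeff_C, coeff_X,
      coeff_X_pow]; norm_num
  simp only [cb0, cb1, cb2, cd1, cd2, Matrix.det_fin_three, Matrix.cons_val', Matrix.cons_val_zero,
    Matrix.cons_val_one, Matrix.head_cons, Matrix.head_fin_const, Matrix.empty_val',
    Matrix.cons_val_fin_one]
  norm_num
  simp only [Matrix.cons_val]
  ring
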